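/- Let f : ℝⁿ → ℝ be continuously differentiable with L-Lipschitz gradient (L > 0), μ > 0, and φ(x) = f(x) + μ‖x‖₁. For x ∈ ℝⁿ let x_ISTA = S_{μ/L}(x − (1/L)∇f(x)). Then φ(x_ISTA) ≤ Γ(x) ≤ φ(x), where Γ(x) = f(x) + ⟨∇f(x), x_ISTA − x⟩ + (L/2)‖x_ISTA − x‖₂² + μ‖x_ISTA‖₁; in particular the ISTA step does not increase the objective φ. -/

import Mathlib

open scoped InnerProductSpace

/-- 1D soft-threshold minimizes the prox model. -/
lemma soft_ineq (α a u s : ℝ) (hα : 0 < α)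
    (hs : s = Real.sign a * max (|a| - α) 0) :
    (s - a)^2/2 + α*|s| ≤ (u - a)^2/2 + α*|u| := by
  rcases lt_trichotomy a 0 with ha|ha|ha
  · rw [Real.sign_of_neg ha, abs_of_neg ha] at hs
    rcases le_or_gt (-a) α with h|h
    · have hs0 : s = 0 := by rw [hs, max_eq_right (by linarith)]; ring
      rw [hs0]
      have h1 : u * a ≤ |u| * α := by
        calc u * a ≤ |u * a| := le_abs_self _
        _ = |u| * |a| := abs_mul u a
        _ = |u| * (-a) := by rw [abs_of_neg ha]
        _ ≤ |u| * α := by nlinarith [abs_nonneg u]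
      simp only [zero_sub, abs_zero, mul_zero, add_zero, neg_sq]
      nlinarith [sq_nonneg u]
    · have hs1 : s = a + α := by rw [hs, max_eq_left (by linarith)]; ring
      rw [hs1, abs_of_neg (show a + α < 0 by linarith)]
      nlinarith [sq_nonneg (a - u + α), neg_abs_le u]
  · simp only [ha, Real.sign_zero, zero_mul] at hs
    rw [hs, ha]
    norm_num
    positivity
  · rw [Real.sign_of_pos ha, abs_of_pos ha] at hs
    rcases le_or_gt a α with h|h
    · have hs0 : s = 0 := by rw [hs, max_eq_right (by linarith)]; ring
      rw [hs0]
      have h1 : -(u * a) ≤ |u| * α := by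
        calc -(u * a) ≤ |u * a| := neg_le_abs _
        _ = |u| * |a| := abs_mul u a
        _ = |u| * a := by rw [abs_of_pos ha]
        _ ≤ |u| * α := by nlinarith [abs_nonneg u]
      have h2 : u * a ≤ |u| * α := by
        calc u * a ≤ |u * a| := le_abs_self _
        _ = |u| * |a| := abs_mul u a
        _ = |u| * a := by rw [abs_of_pos ha]
        _ ≤ |u| * α := by nlinarith [abs_nonneg u]
      simp only [zero_sub, abs_zero, mul_zero, add_zero, neg_sq]
      nlinarith [sq_nonneg u]
    · have hs1 : s = a - α := by rw [hs, max_eq_left (by linarith)]; ring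
      rw [hs1, abs_of_pos (show 0 < a - α by linarith)]
      nlinarith [sq_nonneg (a - u - α), le_abs_self u]

lemma soft_ineq' (L mu a u s : ℝ) (hL : 0 < L) (hmu : 0 < mu)
    (hs : s = Real.sign a * max (|a| - mu/L) 0) :
    L*(u - a) * (s - u) + L/2*(s - u)^2 + mu*|s| ≤ mu*|u| := by
  have key := soft_ineq (mu/L) a u s (div_pos hmu hL) hs
  have hLm : L * (mu/L) = mu := mul_div_cancel₀ mu hL.ne'
  have key2 := mul_le_mul_of_nonneg_left key hL.le
  nlinarith [key2, hLm, abs_nonneg s, abs_nonneg u]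

/-- Descent lemma. -/
lemma descent_lemma {n : ℕ} (f : EuclideanSpace ℝ (Fin n) → ℝ) (L : ℝ) (hL : 0 < L)
    (hf : ContDiff ℝ 1 f)
    (hlip : ∀ x y : EuclideanSpace ℝ (Fin n),
      ‖gradient f x - gradient f y‖ ≤ L * ‖x - y‖)
    (x y : EuclideanSpace ℝ (Fin n)) :
    f y ≤ f x + ⟪gradient f x, y - x⟫_ℝ + L/2 * ‖y - x‖^2 := by
  set d := y - x with hd
  set A := ⟪gradient f x, d⟫_ℝ with hA
  set B := ‖d‖^2 with hB
  have hdiff : Differentiable ℝ f := hf.differentiable one_ne_zero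
  have hgrad : ∀ p, HasGradientAt f (gradient f p) p := fun p => (hdiff p).hasGradientAt
  have hc : ∀ t : ℝ, HasDerivAt (fun t : ℝ => x + t • d) d t := by
    intro t
    simpa using ((hasDerivAt_id t).smul_const d).const_add x
  have hg : ∀ t : ℝ, HasDerivAt (fun t : ℝ => f (x + t • d))
      ⟪gradient f (x + t • d), d⟫_ℝ t := by
    intro t
    have := ((hgrad (x + t • d)).hasFDerivAt).comp_hasDerivAt t (hc t)
    simpa [InnerProductSpace.toDual_apply_apply, Function.comp_def] using this
  set h : ℝ → ℝ := fun t => f x + t * A + t^2 * (L/2 * B) - f (x + t • d) with hh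
  have hder : ∀ t : ℝ, HasDerivAt h
      (A + 2*t*(L/2*B) - ⟪gradient f (x + t • d), d⟫_ℝ) t := by
    intro t
    have h1 : HasDerivAt (fun t : ℝ => f x + t * A + t^2 * (L/2*B))
        (A + 2*t*(L/2*B)) t := by
      have p1 : HasDerivAt (fun t : ℝ => t * A) A t := hasDerivAt_mul_const A
      have p2 : HasDerivAt (fun t : ℝ => t^2) (2*t) t := by
        simpa using hasDerivAt_pow 2 t
      have p3 := p2.mul_const (L/2*B)
      simpa [mul_comm, mul_assoc, mul_left_comm, Pi.add_def] using (p1.const_add (f x)).add p3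
    exact h1.sub (hg t)
  have hnn : ∀ t ∈ Set.Ioo (0:ℝ) 1, 0 ≤ deriv h t := by
    intro t ht
    rw [(hder t).deriv]
    have hsplit : ⟪gradient f (x + t • d), d⟫_ℝ - A
        = ⟪gradient f (x + t • d) - gradient f x, d⟫_ℝ := by
      rw [hA, inner_sub_left]
    have hb : ⟪gradient f (x + t • d) - gradient f x, d⟫_ℝ ≤ L * (t * ‖d‖) * ‖d‖ := by
      calc ⟪gradient f (x + t • d) - gradient f x, d⟫_ℝ
          ≤ ‖gradient f (x + t • d) - gradient f x‖ * ‖d‖ := real_inner_le_norm _ _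
        _ ≤ (L * ‖(x + t • d) - x‖) * ‖d‖ := by
            have := hlip (x + t • d) x
            nlinarith [norm_nonneg d]
        _ = L * (t * ‖d‖) * ‖d‖ := by
            rw [add_sub_cancel_left, norm_smul, Real.norm_eq_abs,
              abs_of_pos ht.1]
    have : ⟪gradient f (x + t • d), d⟫_ℝ ≤ A + L * t * B := by
      have := hsplit ▸ hb
      rw [hB]
      nlinarith
    nlinarith
  have hcont : ContinuousOn h (Set.Icc 0 1) :=
    fun t _ => ((hder t).differentiableAt.continuousAt).continuousWithinAt
  have hdOn : DifferentiableOn ℝ h (interior (Set.Icc (0:ℝ) 1)) :=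
    fun t _ => (hder t).differentiableAt.differentiableWithinAt
  have hmono := monotoneOn_of_deriv_nonneg (convex_Icc (0:ℝ) 1) hcont hdOn
    (by rwa [interior_Icc])
  have h01 := hmono (Set.left_mem_Icc.2 zero_le_one) (Set.right_mem_Icc.2 zero_le_one)
    zero_le_one
  have e0 : h 0 = 0 := by simp [hh]
  have e1 : h 1 = f x + A + L/2*B - f y := by
    have hx1 : x + (1:ℝ) • d = y := by rw [hd]; simp
    show f x + 1 * A + 1^2 * (L/2*B) - f (x + (1:ℝ) • d) = _
    rw [hx1]; ring
  rw [e0, e1] at h01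
  linarith


/-- the ISTA step `x_ISTA = S_{μ/L}(x − (1/L)∇f(x))` satisfies
`φ(x_ISTA) ≤ Γ(x) ≤ φ(x)`, where `Γ(x)` is the value of the proximal upper
model at `x_ISTA`; in particular the ISTA step does not increase `φ`. -/
theorem stmt_16 {n : ℕ} (hn : 0 < n)
    (f : EuclideanSpace ℝ (Fin n) → ℝ)
    (L mu : ℝ) (hL : 0 < L) (hmu : 0 < mu)
    (hf : ContDiff ℝ 1 f)
    (hlip : ∀ x y : EuclideanSpace ℝ (Fin n),
      ‖gradient f x - gradient f y‖ ≤ L * ‖x - y‖)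
    (φ : EuclideanSpace ℝ (Fin n) → ℝ)
    (hφ : ∀ y, φ y = f y + mu * ∑ i, |y i|)
    (x xISTA : EuclideanSpace ℝ (Fin n))
    (hxISTA : ∀ i : Fin n,
      xISTA i = Real.sign (x i - (1 / L) * gradient f x i) *
        max (|x i - (1 / L) * gradient f x i| - mu / L) 0)
    (Γ : ℝ)
    (hΓ : Γ = f x + ⟪gradient f x, xISTA - x⟫_ℝ + L / 2 * ‖xISTA - x‖ ^ 2
      + mu * ∑ i, |xISTA i|) :
    φ xISTA ≤ Γ ∧ Γ ≤ φ x := by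
  have hdesc := descent_lemma f L hL hf hlip x xISTA
  have hcoord : ∀ i : Fin n, gradient f x i * (xISTA i - x i)
      + L/2 * (xISTA i - x i)^2 + mu * |xISTA i| ≤ mu * |x i| := by
    intro i
    have hkey := soft_ineq' L mu (x i - (1/L) * gradient f x i) (x i) (xISTA i)
      hL hmu (hxISTA i)
    have e : L * (x i - (x i - 1/L * gradient f x i)) = gradient f x i := by
      field_simp
      ring
    rw [e] at hkey
    exact hkey
  have hinner : ⟪gradient f x, xISTA - x⟫_ℝ
      = ∑ i, gradient f x i * (xISTA i - x i) := by
    rw [PiLp.inner_apply]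
    simp [RCLike.inner_apply]
    exact Finset.sum_congr rfl (fun i _ => mul_comm _ _)
  have hnorm : ‖xISTA - x‖^2 = ∑ i, (xISTA i - x i)^2 := by
    rw [← real_inner_self_eq_norm_sq, PiLp.inner_apply]
    simp [RCLike.inner_apply, sq]
  have hsum := Finset.sum_le_sum (fun i (_ : i ∈ Finset.univ) => hcoord i)
  have h2 : (∑ i, gradient f x i * (xISTA i - x i))
      + (∑ i, L/2 * (xISTA i - x i)^2) + (∑ i, mu * |xISTA i|)
      ≤ ∑ i, mu * |x i| := by
    simpa [Finset.sum_add_distrib] using hsum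
  have e1 : L/2 * (∑ i, (xISTA i - x i)^2) = ∑ i, L/2 * (xISTA i - x i)^2 :=
    Finset.mul_sum _ _ _
  have e2 : mu * (∑ i, |xISTA i|) = ∑ i, mu * |xISTA i| := Finset.mul_sum _ _ _
  have e3 : mu * (∑ i, |x i|) = ∑ i, mu * |x i| := Finset.mul_sum _ _ _
  constructor
  · rw [hφ, hΓ]
    linarith [hdesc]
  · rw [hΓ, hφ x, hinner, hnorm]
    linarith [h2, e1, e2, e3]
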